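/- (Fatou's lemma) Let f ∈ ℤ[[t]] be a formal power series with integer coefficients and constant coefficient 1. Suppose f is the expansion of a rational function over ℚ, i.e., there exist P, Q ∈ ℚ[t] with Q(0) ≠ 0 and Q·f = P in ℚ[[t]]. Then there exist coprime polynomials P', Q' ∈ ℤ[t] with integer coefficients satisfying P'(0) = Q'(0) = 1 and Q'·f = P' in ℚ[[t]]. -/

import Mathlib

open Polynomial PowerSeries

section FatouAux

/-- Casting a mapped polynomial to a power series equals mapping the cast. -/
private lemma fatou_coe_map {R S : Type*} [CommSemiring R] [CommSemiring S] (f : R →+* S)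
    (p : R[X]) :
    ((p.map f : S[X]) : PowerSeries S) = PowerSeries.map f (p : PowerSeries R) := by
  ext n
  simp [Polynomial.coeff_coe, PowerSeries.coeff_map, Polynomial.coeff_map]

private lemma fatou_ps_map_injective {R S : Type*} [Semiring R] [Semiring S] (f : R →+* S)
    (hf : Function.Injective f) : Function.Injective (PowerSeries.map f) := by
  intro x y h
  ext n
  apply hf
  simpa only [PowerSeries.coeff_map] using congrArg (PowerSeries.coeff n) h

private lemma fatou_int_smul {q : ℚ[X]} {m : ℤ} : (m : ℤ) • q = Polynomial.C (m : ℚ) * q := by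
  rw [zsmul_eq_mul, ← Polynomial.C_eq_intCast]

/-- The key descent: if `q ∈ ℤ[[t]]` has a coefficient not divisible by the prime `p`,
but `p` divides its constant coefficient, then `q` cannot divide a nonzero integer
constant in `ℤ[[t]]`. -/
private lemma fatou_descent (p : ℕ) (hp : p.Prime) (q : PowerSeries ℤ)
    (h0 : (p : ℤ) ∣ PowerSeries.coeff 0 q)
    (j : ℕ) (hj : ¬ (p : ℤ) ∣ PowerSeries.coeff j q) :
    ∀ N : ℕ, ∀ n : ℤ, n.natAbs ≤ N → n ≠ 0 →
      ∀ g : PowerSeries ℤ, q * g = PowerSeries.C n → False := by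
  haveI : Fact p.Prime := ⟨hp⟩
  intro N
  induction N with
  | zero => exact fun n hle hn g _ => hn (Int.natAbs_eq_zero.mp (Nat.le_zero.mp hle))
  | succ N ih =>
    intro n hle hn g hg
    have hc : PowerSeries.coeff 0 q * PowerSeries.coeff 0 g = n := by
      have := congrArg (PowerSeries.coeff 0) hg
      simpa only [PowerSeries.coeff_zero_eq_constantCoeff_apply, map_mul,
        PowerSeries.constantCoeff_C] using this
    have hpn : (p : ℤ) ∣ n := hc ▸ h0.mul_right _
    set φ : PowerSeries ℤ →+* PowerSeries (ZMod p) :=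
      PowerSeries.map (Int.castRingHom (ZMod p)) with hφ
    have hq0 : φ q ≠ 0 := by
      intro hzero
      apply hj
      have := congrArg (PowerSeries.coeff j) hzero
      rw [hφ, PowerSeries.coeff_map] at this
      simpa [ZMod.intCast_zmod_eq_zero_iff_dvd] using this
    have hg0 : φ g = 0 := by
      have hmul : φ q * φ g = 0 := by
        rw [← map_mul, hg, hφ, PowerSeries.map_C]
        have : ((n : ZMod p)) = 0 := (ZMod.intCast_zmod_eq_zero_iff_dvd n p).mpr hpn
        simp [Int.castRingHom, this]
      exact (mul_eq_zero.mp hmul).resolve_left hq0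
    have hdvd : ∀ k, (p : ℤ) ∣ PowerSeries.coeff k g := by
      intro k
      have := congrArg (PowerSeries.coeff k) hg0
      rw [hφ, PowerSeries.coeff_map] at this
      simpa [ZMod.intCast_zmod_eq_zero_iff_dvd] using this
    set g₁ : PowerSeries ℤ := PowerSeries.mk fun k => PowerSeries.coeff k g / p with hg₁
    have hgfac : g = PowerSeries.C (p : ℤ) * g₁ := by
      ext k
      rw [PowerSeries.coeff_C_mul, hg₁, PowerSeries.coeff_mk,
        Int.mul_ediv_cancel' (hdvd k)]
    set m : ℤ := n / p with hm
    have hnm : n = p * m := (Int.mul_ediv_cancel' hpn).symm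
    have hm0 : m ≠ 0 := by
      intro h0'
      rw [h0', mul_zero] at hnm
      exact hn hnm
    have hqg₁ : q * g₁ = PowerSeries.C m := by
      have hp0 : (p : ℤ) ≠ 0 := Int.natCast_ne_zero.mpr hp.ne_zero
      have hCp : (PowerSeries.C (p : ℤ)) ≠ 0 := fun hC =>
        hp0 (by simpa using congrArg (PowerSeries.constantCoeff) hC)
      apply mul_left_cancel₀ hCp
      calc PowerSeries.C (p : ℤ) * (q * g₁) = q * (PowerSeries.C (p : ℤ) * g₁) := by ring
        _ = PowerSeries.C n := by rw [← hgfac, hg]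
        _ = PowerSeries.C (p : ℤ) * PowerSeries.C m := by rw [← map_mul, ← hnm]
    have hlt : m.natAbs ≤ N := by
      have h2 : 2 ≤ p := hp.two_le
      have heq : n.natAbs = p * m.natAbs := by
        rw [hnm, Int.natAbs_mul, Int.natAbs_natCast]
      have hmpos : 0 < m.natAbs := Int.natAbs_pos.mpr hm0
      have hmul : 2 * m.natAbs ≤ p * m.natAbs := Nat.mul_le_mul_right _ h2
      omega
    exact ih m hlt hm0 g₁ hqg₁

end FatouAux

/-- Fatou's lemma, as invoked in Deligne's Weil I in the proof that (1.7) implies (1.6):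
if `f ∈ ℤ[[t]]` has constant coefficient `1` and is the expansion of a rational function
over `ℚ`, then `f = P'/Q'` with `P', Q' ∈ ℤ[t]` coprime (in `ℚ[t]`) and
`P'(0) = Q'(0) = 1`. -/
theorem fatou_lemma_integral_power_series
    (f : PowerSeries ℤ) (h1 : PowerSeries.constantCoeff f = 1)
    (h : ∃ P Q : Polynomial ℚ, Q.eval 0 ≠ 0 ∧
      (Q : PowerSeries ℚ) * PowerSeries.map (Int.castRingHom ℚ) f = (P : PowerSeries ℚ)) :
    ∃ P' Q' : Polynomial ℤ,
      IsCoprime (P'.map (Int.castRingHom ℚ)) (Q'.map (Int.castRingHom ℚ)) ∧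
      P'.eval 0 = 1 ∧ Q'.eval 0 = 1 ∧
      ((Q'.map (Int.castRingHom ℚ) : Polynomial ℚ) : PowerSeries ℚ) *
          PowerSeries.map (Int.castRingHom ℚ) f =
        ((P'.map (Int.castRingHom ℚ) : Polynomial ℚ) : PowerSeries ℚ) := by
  classical
  obtain ⟨P, Q, hQ0, hQF⟩ := h
  set ι : ℤ →+* ℚ := Int.castRingHom ℚ with hι
  set F : PowerSeries ℚ := PowerSeries.map ι f with hF
  have hQne : Q ≠ 0 := fun hQ => hQ0 (by simp [hQ])
  -- divide by the gcd to get a coprime pair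
  set D : ℚ[X] := GCDMonoid.gcd P Q with hD
  have hDne : D ≠ 0 := gcd_ne_zero_of_right hQne
  set P₀ : ℚ[X] := P / D with hP₀
  set Q₀ : ℚ[X] := Q / D with hQ₀
  have hcop : IsCoprime P₀ Q₀ := isCoprime_div_gcd_div_gcd hQne
  have hPfac : D * P₀ = P := EuclideanDomain.mul_div_cancel' hDne (gcd_dvd_left P Q)
  have hQfac : D * Q₀ = Q := EuclideanDomain.mul_div_cancel' hDne (gcd_dvd_right P Q)
  have hQ₀0 : Q₀.eval 0 ≠ 0 := by
    intro h0
    apply hQ0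
    rw [← hQfac, Polynomial.eval_mul, h0, mul_zero]
  have hQ₀ne : Q₀ ≠ 0 := fun hq => hQ₀0 (by simp [hq])
  have hQ₀F : (Q₀ : PowerSeries ℚ) * F = (P₀ : PowerSeries ℚ) := by
    have hDcast : (D : PowerSeries ℚ) ≠ 0 := fun hc => hDne (Polynomial.coe_eq_zero_iff.mp hc)
    apply mul_left_cancel₀ hDcast
    calc (D : PowerSeries ℚ) * ((Q₀ : PowerSeries ℚ) * F)
        = ((D * Q₀ : ℚ[X]) : PowerSeries ℚ) * F := by rw [Polynomial.coe_mul]; ring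
      _ = (P : PowerSeries ℚ) := by rw [hQfac, hQF]
      _ = ((D * P₀ : ℚ[X]) : PowerSeries ℚ) := by rw [hPfac]
      _ = (D : PowerSeries ℚ) * (P₀ : PowerSeries ℚ) := by rw [Polynomial.coe_mul]
  -- integer normalization of the denominator
  obtain ⟨b, hb⟩ := IsLocalization.integerNormalization_map_to_map (nonZeroDivisors ℤ) Q₀
  set Qn : ℤ[X] := IsLocalization.integerNormalization (nonZeroDivisors ℤ) Q₀ with hQn
  have hbne : (b : ℤ) ≠ 0 := nonZeroDivisors.coe_ne_zero b
  have hbmap : Qn.map ι = Polynomial.C ((b : ℤ) : ℚ) * Q₀ := by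
    rw [hQn, ← fatou_int_smul]
    rw [algebraMap_int_eq] at hb
    exact hb
  have hQnne : Qn ≠ 0 := by
    intro hz
    have : Polynomial.C ((b : ℤ) : ℚ) * Q₀ = 0 := by rw [← hbmap, hz, Polynomial.map_zero]
    rcases mul_eq_zero.mp this with hc | hc
    · exact hbne (by exact_mod_cast Polynomial.C_eq_zero.mp hc)
    · exact hQ₀ne hc
  set Qi : ℤ[X] := Qn.primPart with hQi
  have hprim : Qi.IsPrimitive := Qn.isPrimitive_primPart
  have hQifac : Qn = Polynomial.C Qn.content * Qi := Qn.eq_C_content_mul_primPart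
  have hcont : Qn.content ≠ 0 := fun hc => hQnne (Polynomial.content_eq_zero_iff.mp hc)
  set u : ℚ := ((b : ℤ) : ℚ) / ((Qn.content : ℤ) : ℚ) with hu
  have hcontQ : ((Qn.content : ℤ) : ℚ) ≠ 0 := by exact_mod_cast hcont
  have hune : u ≠ 0 := div_ne_zero (by exact_mod_cast hbne) hcontQ
  have hmapfac : Qn.map ι = Polynomial.C ((Qn.content : ℤ) : ℚ) * Qi.map ι := by
    nth_rewrite 1 [hQifac]
    rw [Polynomial.map_mul, Polynomial.map_C, hι]
    norm_num
  have hQiℚ : Qi.map ι = Polynomial.C u * Q₀ := by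
    apply mul_left_cancel₀ (show (Polynomial.C ((Qn.content : ℤ) : ℚ)) ≠ 0 from
      fun hc => hcontQ (Polynomial.C_eq_zero.mp hc))
    calc Polynomial.C ((Qn.content : ℤ) : ℚ) * Qi.map ι
        = Qn.map ι := hmapfac.symm
      _ = Polynomial.C ((b : ℤ) : ℚ) * Q₀ := hbmap
      _ = Polynomial.C ((Qn.content : ℤ) : ℚ) * (Polynomial.C u * Q₀) := by
          rw [← mul_assoc, ← Polynomial.C_mul, hu, mul_div_cancel₀ _ hcontQ]
  -- power series identity over ℚ for Qi
  set P₂ : ℚ[X] := Polynomial.C u * P₀ with hP₂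
  have hQiF : ((Qi.map ι : ℚ[X]) : PowerSeries ℚ) * F = (P₂ : PowerSeries ℚ) := by
    rw [hQiℚ, Polynomial.coe_mul, hP₂, Polynomial.coe_mul, mul_assoc, hQ₀F]
  -- P₂ has integer coefficients
  have hP₂lifts : ∃ Pi : ℤ[X], Pi.map ι = P₂ := by
    rw [← Polynomial.mem_lifts]
    rw [Polynomial.lifts_iff_coeff_lifts]
    intro n
    have : P₂.coeff n = PowerSeries.coeff n (P₂ : PowerSeries ℚ) := (Polynomial.coeff_coe P₂ n).symm
    rw [this, ← hQiF]
    have : ((Qi.map ι : ℚ[X]) : PowerSeries ℚ) * F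
        = PowerSeries.map ι ((Qi : PowerSeries ℤ) * f) := by
      rw [map_mul, ← fatou_coe_map, hF]
    rw [this, PowerSeries.coeff_map]
    exact ⟨_, rfl⟩
  obtain ⟨Pi, hPi⟩ := hP₂lifts
  -- the integral power series identity
  have hιinj : Function.Injective ⇑ι := by
    rw [hι, Int.coe_castRingHom]
    exact Int.cast_injective
  have hQifZ : (Qi : PowerSeries ℤ) * f = (Pi : PowerSeries ℤ) := by
    apply fatou_ps_map_injective ι hιinj
    rw [map_mul, ← fatou_coe_map, ← fatou_coe_map, hPi, ← hF, hQiF]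
  -- coprimality of (Pi, Qi) over ℚ
  have hcop₂ : IsCoprime (Pi.map ι) (Qi.map ι) := by
    rw [hPi, hQiℚ, hP₂]
    have hCu : IsUnit (Polynomial.C u) := Polynomial.isUnit_C.mpr (isUnit_iff_ne_zero.mpr hune)
    rw [isCoprime_mul_unit_left_left hCu, isCoprime_mul_unit_left_right hCu]
    exact hcop
  -- Bezout over ℤ
  obtain ⟨A, B, hAB⟩ := id hcop₂
  obtain ⟨a, ha⟩ := IsLocalization.integerNormalization_map_to_map (nonZeroDivisors ℤ) A
  obtain ⟨b', hb'⟩ := IsLocalization.integerNormalization_map_to_map (nonZeroDivisors ℤ) B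
  set Ai : ℤ[X] := IsLocalization.integerNormalization (nonZeroDivisors ℤ) A with hAi
  set Bi : ℤ[X] := IsLocalization.integerNormalization (nonZeroDivisors ℤ) B with hBi
  rw [algebraMap_int_eq, fatou_int_smul] at ha hb'
  have hane : (a : ℤ) ≠ 0 := nonZeroDivisors.coe_ne_zero a
  have hb'ne : (b' : ℤ) ≠ 0 := nonZeroDivisors.coe_ne_zero b'
  set n : ℤ := (a : ℤ) * (b' : ℤ) with hn
  have hnne : n ≠ 0 := mul_ne_zero hane hb'ne
  have hBez : Polynomial.C (b' : ℤ) * Ai * Pi + Polynomial.C (a : ℤ) * Bi * Qi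
      = Polynomial.C n := by
    apply Polynomial.map_injective ι hιinj
    rw [hPi] at hAB
    simp only [Polynomial.map_add, Polynomial.map_mul, Polynomial.map_C, hι,
      Int.coe_castRingHom, ha, hb', hPi, hn, Int.cast_mul, Polynomial.C_mul]
    have hPi' : Polynomial.map (Int.castRingHom ℚ) Pi = Polynomial.C u * P₀ := hPi
    linear_combination Polynomial.C ((a : ℤ) : ℚ) * Polynomial.C ((b' : ℤ) : ℚ) * hAB
      + Polynomial.C ((b' : ℤ) : ℚ) * Polynomial.C ((a : ℤ) : ℚ) * A * hPi'
  -- the constant q * g = C n identity over ℤ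
  set g : PowerSeries ℤ := (Polynomial.C (b' : ℤ) * Ai : ℤ[X]) * f
      + ((Polynomial.C (a : ℤ) * Bi : ℤ[X]) : PowerSeries ℤ) with hg
  have hqg : (Qi : PowerSeries ℤ) * g = PowerSeries.C n := by
    have e1 : (Qi : PowerSeries ℤ) * g
        = ((Polynomial.C (b' : ℤ) * Ai : ℤ[X]) : PowerSeries ℤ) * ((Qi : PowerSeries ℤ) * f)
          + ((Polynomial.C (a : ℤ) * Bi : ℤ[X]) : PowerSeries ℤ) * (Qi : PowerSeries ℤ) := by
      rw [hg]; ring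
    rw [e1, hQifZ, ← Polynomial.coe_mul, ← Polynomial.coe_mul, ← Polynomial.coe_add, hBez,
      Polynomial.coe_C]
  -- the constant coefficient of Qi is a unit
  set e : ℤ := Qi.coeff 0 with he
  have heQ : (Qi.map ι).coeff 0 = (e : ℚ) := by
    rw [Polynomial.coeff_map, hι, he, Int.coe_castRingHom]
  have hene : e ≠ 0 := by
    intro h0
    have : (Qi.map ι).coeff 0 = 0 := by rw [heQ, h0]; norm_num
    rw [hQiℚ, Polynomial.coeff_zero_eq_eval_zero, Polynomial.eval_mul, Polynomial.eval_C] at this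
    rcases mul_eq_zero.mp this with hc | hc
    · exact hune hc
    · rw [← Polynomial.coeff_zero_eq_eval_zero] at hc
      exact hQ₀0 (by rwa [Polynomial.coeff_zero_eq_eval_zero] at hc)
  have heunit : e = 1 ∨ e = -1 := by
    by_contra hcon
    push_neg at hcon
    have hnatAbs : e.natAbs ≠ 1 := by
      intro h1
      rcases Int.natAbs_eq_iff.mp h1 with h | h
      · exact hcon.1 (by exact_mod_cast h)
      · exact hcon.2 (by exact_mod_cast h)
    have hnatne : e.natAbs ≠ 0 := fun h0 => hene (Int.natAbs_eq_zero.mp h0)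
    obtain ⟨p, hp, hpdvd⟩ := Nat.exists_prime_and_dvd hnatAbs
    have hpe : (p : ℤ) ∣ e := Int.dvd_natAbs.mp (Int.natCast_dvd_natCast.mpr hpdvd)
    -- find a coefficient of Qi not divisible by p
    have hex : ∃ j, ¬ (p : ℤ) ∣ Qi.coeff j := by
      by_contra hall
      push_neg at hall
      have hCdvd : Polynomial.C (p : ℤ) ∣ Qi := (Polynomial.C_dvd_iff_dvd_coeff _ _).mpr hall
      have hu' := hprim _ hCdvd
      rw [Int.isUnit_iff] at hu'
      have h2 := hp.two_le
      rcases hu' with h' | h' <;> omega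
    obtain ⟨j, hj⟩ := hex
    refine fatou_descent p hp (Qi : PowerSeries ℤ) ?_ j ?_ n.natAbs n le_rfl hnne g hqg
    · rw [Polynomial.coeff_coe]; exact hpe
    · rw [Polynomial.coeff_coe]; exact hj
  have hee : e * e = 1 := by rcases heunit with h | h <;> rw [h] <;> ring
  -- final answer
  refine ⟨Polynomial.C e * Pi, Polynomial.C e * Qi, ?_, ?_, ?_, ?_⟩
  · simp only [Polynomial.map_mul, Polynomial.map_C, hι, Int.coe_castRingHom]
    have hCe : IsUnit (Polynomial.C ((e : ℤ) : ℚ)) :=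
      Polynomial.isUnit_C.mpr (isUnit_iff_ne_zero.mpr (by exact_mod_cast hene))
    rw [isCoprime_mul_unit_left_left hCe, isCoprime_mul_unit_left_right hCe]
    exact hcop₂
  · -- P'.eval 0 = 1
    have hPi0 : Pi.coeff 0 = e := by
      have := congrArg (PowerSeries.coeff 0) hQifZ
      rw [PowerSeries.coeff_zero_eq_constantCoeff_apply, PowerSeries.coeff_zero_eq_constantCoeff_apply] at this
      rw [map_mul] at this
      have hQc : PowerSeries.constantCoeff (Qi : PowerSeries ℤ) = e := by
        rw [← PowerSeries.coeff_zero_eq_constantCoeff_apply, Polynomial.coeff_coe]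
      have hPc : PowerSeries.constantCoeff (Pi : PowerSeries ℤ) = Pi.coeff 0 := by
        rw [← PowerSeries.coeff_zero_eq_constantCoeff_apply, Polynomial.coeff_coe]
      rw [hQc, h1, hPc, mul_one] at this
      exact this.symm
    rw [Polynomial.eval_mul, Polynomial.eval_C, ← Polynomial.coeff_zero_eq_eval_zero, hPi0, hee]
  · rw [Polynomial.eval_mul, Polynomial.eval_C, ← Polynomial.coeff_zero_eq_eval_zero, ← he, hee]
  · simp only [Polynomial.map_mul, Polynomial.map_C, Polynomial.coe_mul, Polynomial.coe_C, hι,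
      Int.coe_castRingHom]
    rw [mul_assoc, hQiF, hPi]
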